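/- Let a < b be real numbers, α > 0, and f : [a,b] → ℝ continuous. Then there exists a unique function g : [a,b] → ℝ that is twice continuously differentiable on [a,b] (one-sided derivatives at the endpoints) and satisfies α·g(x) − g″(x) = f(x) for all x ∈ [a,b] together with the Neumann boundary conditions g′(a) = 0 and g′(b) = 0. -/

import Mathlib

open Set MeasureTheory intervalIntegral

/-- for `a < b`, `α > 0` and `f` continuous on `[a,b]`, there is a unique
`g` twice continuously differentiable on `[a,b]` (one-sided derivatives at the endpoints,
i.e. derivatives within `[a,b]`) with `α·g − g″ = f` on `[a,b]` and Neumann boundary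
conditions `g′(a) = 0`, `g′(b) = 0`. (Functions on `[a,b]` are modelled as functions on
`ℝ`; uniqueness is uniqueness of the values on `[a,b]`.) -/

lemma neumann_exists (a b α : ℝ) (hab : a < b) (hα : 0 < α) (F : ℝ → ℝ) (hF : Continuous F) :
    ∃ g g1 : ℝ → ℝ, (∀ x, HasDerivAt g (g1 x) x) ∧
      (∀ x, HasDerivAt g1 (α * g x - F x) x) ∧ g1 a = 0 ∧ g1 b = 0 := by
  set ω : ℝ := Real.sqrt α with hωdef
  have hω : 0 < ω := Real.sqrt_pos.mpr hα
  have hω2 : ω ^ 2 = α := Real.sq_sqrt hα.le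
  set C : ℝ → ℝ := fun x => ∫ t in a..x, Real.cosh (ω*t) * F t with hCdef
  set S : ℝ → ℝ := fun x => ∫ t in a..x, Real.sinh (ω*t) * F t with hSdef
  have hcC : Continuous fun t => Real.cosh (ω*t) * F t :=
    (Real.continuous_cosh.comp (continuous_const.mul continuous_id)).mul hF
  have hcS : Continuous fun t => Real.sinh (ω*t) * F t :=
    (Real.continuous_sinh.comp (continuous_const.mul continuous_id)).mul hF
  have hC : ∀ x, HasDerivAt C (Real.cosh (ω*x) * F x) x := fun x =>
    integral_hasDerivAt_right (hcC.intervalIntegrable _ _)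
      (hcC.stronglyMeasurableAtFilter _ _) hcC.continuousAt
  have hS : ∀ x, HasDerivAt S (Real.sinh (ω*x) * F x) x := fun x =>
    integral_hasDerivAt_right (hcS.intervalIntegrable _ _)
      (hcS.stronglyMeasurableAtFilter _ _) hcS.continuousAt
  have hD : ω * Real.sinh (ω*(b-a)) ≠ 0 := by
    have : 0 < Real.sinh (ω*(b-a)) := Real.sinh_pos_iff.mpr (by nlinarith)
    positivity
  set A : ℝ := (Real.cosh (ω*b) * C b - Real.sinh (ω*b) * S b) / (ω * Real.sinh (ω*(b-a))) with hAdef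
  set g : ℝ → ℝ := fun x =>
    A * Real.cosh (ω*(x-a)) - (1/ω) * (Real.sinh (ω*x) * C x - Real.cosh (ω*x) * S x) with hgdef
  set g1 : ℝ → ℝ := fun x =>
    A * (ω * Real.sinh (ω*(x-a))) - (Real.cosh (ω*x) * C x - Real.sinh (ω*x) * S x) with hg1def
  have hcosha : ∀ x, HasDerivAt (fun y => Real.cosh (ω*(y-a))) (ω * Real.sinh (ω*(x-a))) x := by
    intro x
    have h := (Real.hasDerivAt_cosh (ω*(x-a))).comp x (((hasDerivAt_id x).sub_const a).const_mul ω)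
    exact h.congr_deriv (by ring)
  have hsinha : ∀ x, HasDerivAt (fun y => Real.sinh (ω*(y-a))) (ω * Real.cosh (ω*(x-a))) x := by
    intro x
    have h := (Real.hasDerivAt_sinh (ω*(x-a))).comp x (((hasDerivAt_id x).sub_const a).const_mul ω)
    exact h.congr_deriv (by ring)
  have hcoshx : ∀ x, HasDerivAt (fun y => Real.cosh (ω*y)) (ω * Real.sinh (ω*x)) x := by
    intro x
    have h := (Real.hasDerivAt_cosh (ω*x)).comp x ((hasDerivAt_id x).const_mul ω)
    exact h.congr_deriv (by ring)
  have hsinhx : ∀ x, HasDerivAt (fun y => Real.sinh (ω*y)) (ω * Real.cosh (ω*x)) x := by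
    intro x
    have h := (Real.hasDerivAt_sinh (ω*x)).comp x ((hasDerivAt_id x).const_mul ω)
    exact h.congr_deriv (by ring)
  refine ⟨g, g1, ?_, ?_, ?_, ?_⟩
  · intro x
    have h := ((hcosha x).const_mul A).sub
      ((((hsinhx x).mul (hC x)).sub ((hcoshx x).mul (hS x))).const_mul (1/ω))
    refine h.congr_deriv ?_
    simp only [hg1def]
    field_simp
    ring
  · intro x
    have h := (((hsinha x).const_mul ω).const_mul A).sub
      ((((hcoshx x).mul (hC x)).sub ((hsinhx x).mul (hS x))))
    refine h.congr_deriv ?_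
    have key := Real.cosh_sq_sub_sinh_sq (ω*x)
    simp only [hgdef]
    rw [← hω2]
    field_simp
    linear_combination (-F x) * key
  · simp only [hg1def, hCdef, hSdef]
    simp [sub_self, intervalIntegral.integral_same]
  · simp only [hg1def, hAdef]
    field_simp
    rw [div_self (right_ne_zero_of_mul hD), sub_self, mul_zero]

theorem stmt14 (a b α : ℝ) (hab : a < b) (hα : 0 < α) (f : ℝ → ℝ)
    (hf : ContinuousOn f (Set.Icc a b)) :
    ∃ g : ℝ → ℝ,
      (ContDiffOn ℝ 2 g (Set.Icc a b) ∧
        (∀ x ∈ Set.Icc a b,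
          α * g x - derivWithin (derivWithin g (Set.Icc a b)) (Set.Icc a b) x = f x) ∧
        derivWithin g (Set.Icc a b) a = 0 ∧ derivWithin g (Set.Icc a b) b = 0) ∧
      ∀ g₂ : ℝ → ℝ,
        (ContDiffOn ℝ 2 g₂ (Set.Icc a b) ∧
          (∀ x ∈ Set.Icc a b,
            α * g₂ x - derivWithin (derivWithin g₂ (Set.Icc a b)) (Set.Icc a b) x = f x) ∧
          derivWithin g₂ (Set.Icc a b) a = 0 ∧ derivWithin g₂ (Set.Icc a b) b = 0) →
        ∀ x ∈ Set.Icc a b, g₂ x = g x := by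
  set F : ℝ → ℝ := fun x => f (min (max x a) b) with hFdef
  have hFc : Continuous F :=
    hf.comp_continuous ((continuous_id.max continuous_const).min continuous_const)
      (fun x => ⟨le_min (le_max_right x a) hab.le, min_le_right _ _⟩)
  have hFeq : ∀ x ∈ Set.Icc a b, F x = f x := by
    intro x hx
    simp only [hFdef]
    rw [max_eq_left hx.1, min_eq_left hx.2]
  obtain ⟨g, g1, hg, hg1, hg1a, hg1b⟩ := neumann_exists a b α hab hα F hFc
  have hU : UniqueDiffOn ℝ (Set.Icc a b) := uniqueDiffOn_Icc hab
  have hdg : ∀ x ∈ Set.Icc a b, derivWithin g (Set.Icc a b) x = g1 x := fun x hx =>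
    ((hg x).hasDerivWithinAt).derivWithin (hU x hx)
  have hdg1 : ∀ x ∈ Set.Icc a b,
      derivWithin (derivWithin g (Set.Icc a b)) (Set.Icc a b) x = α * g x - F x := by
    intro x hx
    rw [derivWithin_congr hdg (hdg x hx)]
    exact ((hg1 x).hasDerivWithinAt).derivWithin (hU x hx)
  have hgc : Continuous g := continuous_iff_continuousAt.mpr fun x => (hg x).continuousAt
  have hg1c : Continuous g1 := continuous_iff_continuousAt.mpr fun x => (hg1 x).continuousAt
  have hsec : Continuous (fun x => α * g x - F x) := (continuous_const.mul hgc).sub hFc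
  have hC2 : ContDiffOn ℝ 2 g (Set.Icc a b) := by
    rw [show (2 : WithTop ℕ∞) = 1 + 1 from rfl, contDiffOn_succ_iff_derivWithin hU]
    refine ⟨fun x hx => (hg x).differentiableAt.differentiableWithinAt, by simp, ?_⟩
    have h1 : ContDiffOn ℝ 1 g1 (Set.Icc a b) := by
      rw [show (1 : WithTop ℕ∞) = 0 + 1 from rfl, contDiffOn_succ_iff_derivWithin hU]
      refine ⟨fun x hx => (hg1 x).differentiableAt.differentiableWithinAt, by simp, ?_⟩
      rw [contDiffOn_zero]
      exact hsec.continuousOn.congr fun x hx => ((hg1 x).hasDerivWithinAt).derivWithin (hU x hx)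
    exact h1.congr hdg
  refine ⟨g, ⟨hC2, ?_, ?_, ?_⟩, ?_⟩
  · intro x hx; rw [hdg1 x hx, hFeq x hx]; ring
  · rw [hdg a ⟨le_refl a, hab.le⟩]; exact hg1a
  · rw [hdg b ⟨hab.le, le_refl b⟩]; exact hg1b
  · rintro g₂ ⟨h2C2, h2eq, h2a, h2b⟩
    set d2 : ℝ → ℝ := derivWithin g₂ (Set.Icc a b) with hd2def
    have h2diff : DifferentiableOn ℝ g₂ (Set.Icc a b) := h2C2.differentiableOn (by norm_num)
    have hd2C1 : ContDiffOn ℝ 1 d2 (Set.Icc a b) := h2C2.derivWithin hU (by norm_num)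
    have hd2diff : DifferentiableOn ℝ d2 (Set.Icc a b) := hd2C1.differentiableOn (by norm_num)
    have hd2' : ∀ x ∈ Set.Icc a b,
        HasDerivWithinAt d2 (α * g₂ x - f x) (Set.Icc a b) x := by
      intro x hx
      have h := (hd2diff x hx).hasDerivWithinAt
      have : derivWithin d2 (Set.Icc a b) x = α * g₂ x - f x := by
        have := h2eq x hx; linarith
      rwa [this] at h
    have hg2' : ∀ x ∈ Set.Icc a b,
        HasDerivWithinAt g₂ (d2 x) (Set.Icc a b) x := fun x hx => (h2diff x hx).hasDerivWithinAt
    set φ : ℝ → ℝ := fun x => (g₂ x - g x) * (d2 x - g1 x) with hφdef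
    have hφd : ∀ x ∈ Set.Icc a b,
        HasDerivWithinAt φ ((d2 x - g1 x)^2 + α * (g₂ x - g x)^2) (Set.Icc a b) x := by
      intro x hx
      have h := ((hg2' x hx).sub (hg x).hasDerivWithinAt).mul
        ((hd2' x hx).sub ((hg1 x).hasDerivWithinAt))
      have hFx := hFeq x hx
      refine h.congr_deriv ?_
      rw [hFx]; simp only [Pi.sub_apply]; ring
    have hφcont : ContinuousOn φ (Set.Icc a b) :=
      ((h2C2.continuousOn.sub hgc.continuousOn).mul
        (hd2C1.continuousOn.sub hg1c.continuousOn))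
    have hφderiv : ∀ x ∈ Set.Ioo a b,
        HasDerivAt φ ((d2 x - g1 x)^2 + α * (g₂ x - g x)^2) x := by
      intro x hx
      exact (hφd x (Set.Ioo_subset_Icc_self hx)).hasDerivAt (Icc_mem_nhds hx.1 hx.2)
    have hmono : MonotoneOn φ (Set.Icc a b) := by
      apply monotoneOn_of_deriv_nonneg (convex_Icc a b) hφcont
      · intro x hx
        rw [interior_Icc] at hx
        exact (hφderiv x hx).differentiableAt.differentiableWithinAt
      · intro x hx
        rw [interior_Icc] at hx
        rw [(hφderiv x hx).deriv]
        positivity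
    have hφa : φ a = 0 := by simp [hφdef, h2a, hg1a]
    have hφb : φ b = 0 := by simp [hφdef, h2b, hg1b]
    have hφ0 : ∀ x ∈ Set.Icc a b, φ x = 0 := by
      intro x hx
      have h1 := hmono ⟨le_refl a, hab.le⟩ hx hx.1
      have h2 := hmono hx ⟨hab.le, le_refl b⟩ hx.2
      rw [hφa] at h1; rw [hφb] at h2; linarith
    have hIoo : ∀ x ∈ Set.Ioo a b, g₂ x = g x := by
      intro x hx
      have hev : φ =ᶠ[nhds x] (fun _ => (0:ℝ)) :=
        Filter.eventuallyEq_of_mem (Icc_mem_nhds hx.1 hx.2) fun y hy => hφ0 y hy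
      have hd0 : deriv φ x = 0 := by rw [hev.deriv_eq, deriv_const]
      rw [(hφderiv x hx).deriv] at hd0
      have h5 : α * (g₂ x - g x)^2 = 0 := by
        linarith [sq_nonneg (d2 x - g1 x), mul_nonneg hα.le (sq_nonneg (g₂ x - g x))]
      have h6 : (g₂ x - g x)^2 = 0 := (mul_eq_zero.mp h5).resolve_left hα.ne'
      have h7 : g₂ x - g x = 0 := by
        have := pow_eq_zero_iff (n := 2) (by norm_num) |>.mp h6
        exact this
      linarith
    intro x hx
    have hcl : x ∈ closure (Set.Ioo a b) := by rw [closure_Ioo hab.ne]; exact hx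
    have hnb : (nhdsWithin x (Set.Ioo a b)).NeBot := mem_closure_iff_nhdsWithin_neBot.mp hcl
    have ht1 : Filter.Tendsto (fun y => g₂ y - g y) (nhdsWithin x (Set.Ioo a b))
        (nhds (g₂ x - g x)) :=
      (((h2C2.continuousOn.sub hgc.continuousOn) x hx).mono Set.Ioo_subset_Icc_self)
    have ht2 : Filter.Tendsto (fun y => g₂ y - g y) (nhdsWithin x (Set.Ioo a b))
        (nhds 0) := by
      apply Filter.Tendsto.congr' _ tendsto_const_nhds
      filter_upwards [self_mem_nhdsWithin] with y hy
      have := hIoo y hy; linarith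
    have := tendsto_nhds_unique ht1 ht2
    linarith
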